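/- A 2-plane P in R^{2,2} is a β-plane (all anti-self-dual 2-forms vanish on P) if and only if P is both J'-invariant and Lagrangian with respect to Ω', where J'(X) = (-X^2,X^1,X^4,-X^3) and Ω'(V,W) = G(V,J'W). -/

import Mathlib

set_option maxHeartbeats 1000000


/- STATEMENT 9: a 2-plane P in ℝ^{2,2} is a β-plane (all anti-self-dual 2-forms
vanish on P) iff P is J'-invariant and Lagrangian for Ω'(V,W) = G(V,J'W),
where J'(X) = (-X²,X¹,X⁴,-X³). -/

open Matrix
noncomputable section

def G (v w : Fin 4 → ℝ) : ℝ := v 0 * w 0 + v 1 * w 1 - v 2 * w 2 - v 3 * w 3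

def gInv : Fin 4 → ℝ := ![1, 1, -1, -1]

def eps (i j k l : Fin 4) : ℝ :=
  (((j:ℕ):ℝ) - ((i:ℕ):ℝ)) * ((((k:ℕ):ℝ) - ((i:ℕ):ℝ)) * ((((l:ℕ):ℝ) - ((i:ℕ):ℝ)) *
    ((((k:ℕ):ℝ) - ((j:ℕ):ℝ)) * ((((l:ℕ):ℝ) - ((j:ℕ):ℝ)) * (((l:ℕ):ℝ) - ((k:ℕ):ℝ)))))) / 12

/-- Hodge star on 2-forms (antisymmetric component matrices) of the neutral
metric, for the orientation used in the paper. -/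
def hodgeStar (M : Matrix (Fin 4) (Fin 4) ℝ) : Matrix (Fin 4) (Fin 4) ℝ :=
  fun i j => -(1/2) * ∑ k : Fin 4, ∑ l : Fin 4, eps i j k l * gInv k * gInv l * M k l

def ωval (M : Matrix (Fin 4) (Fin 4) ℝ) (v w : Fin 4 → ℝ) : ℝ :=
  ∑ i : Fin 4, ∑ j : Fin 4, M i j * v i * w j

def J'map (v : Fin 4 → ℝ) : Fin 4 → ℝ := ![-v 1, v 0, v 3, -v 2]

/- ## auxiliary definitions -/

def Kmap (v : Fin 4 → ℝ) : Fin 4 → ℝ := ![v 2, v 3, v 0, v 1]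
def Lmap (v : Fin 4 → ℝ) : Fin 4 → ℝ := ![v 3, -v 2, -v 1, v 0]

def Bf : LinearMap.BilinForm ℝ (Fin 4 → ℝ) :=
  LinearMap.mk₂ ℝ G
    (by intro x y z; simp [G]; ring)
    (by intro a x y; simp [G]; ring)
    (by intro x y z; simp [G]; ring)
    (by intro a x y; simp [G]; ring)

lemma Bf_apply (v w : Fin 4 → ℝ) : Bf v w = G v w := rfl

def Jlin : (Fin 4 → ℝ) ≃ₗ[ℝ] (Fin 4 → ℝ) where
  toFun := J'map
  invFun := fun v => ![v 1, -v 0, -v 3, v 2]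
  map_add' := by intro x y; funext i; fin_cases i <;> simp [J'map] <;> ring
  map_smul' := by intro a x; funext i; fin_cases i <;> simp [J'map, mul_comm]
  left_inv := by intro v; funext i; fin_cases i <;> simp [J'map]
  right_inv := by intro v; funext i; fin_cases i <;> simp [J'map]

def Klin : (Fin 4 → ℝ) ≃ₗ[ℝ] (Fin 4 → ℝ) where
  toFun := Kmap
  invFun := Kmap
  map_add' := by intro x y; funext i; fin_cases i <;> simp [Kmap]
  map_smul' := by intro a x; funext i; fin_cases i <;> simp [Kmap, mul_comm]
  left_inv := by intro v; funext i; fin_cases i <;> simp [Kmap]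
  right_inv := by intro v; funext i; fin_cases i <;> simp [Kmap]

def Llin : (Fin 4 → ℝ) ≃ₗ[ℝ] (Fin 4 → ℝ) where
  toFun := Lmap
  invFun := Lmap
  map_add' := by intro x y; funext i; fin_cases i <;> simp [Lmap] <;> ring
  map_smul' := by intro a x; funext i; fin_cases i <;> simp [Lmap, mul_comm]
  left_inv := by intro v; funext i; fin_cases i <;> simp [Lmap] <;> ring
  right_inv := by intro v; funext i; fin_cases i <;> simp [Lmap] <;> ring

lemma hrefl : Bf.IsRefl := by
  intro x y h
  rw [Bf_apply] at *
  unfold G at *; linarith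

lemma hnd : Bf.Nondegenerate := by
  refine ⟨fun x hx => ?_, fun x hx => ?_⟩ <;>
  · have h0 := hx ![1,0,0,0]
    have h1 := hx ![0,1,0,0]
    have h2 := hx ![0,0,1,0]
    have h3 := hx ![0,0,0,1]
    simp [Bf_apply, G, Matrix.vecHead, Matrix.vecTail] at h0 h1 h2 h3
    funext i; fin_cases i <;> simpa

def A1 : Matrix (Fin 4) (Fin 4) ℝ := ![![0,1,0,0], ![-1,0,0,0], ![0,0,0,1], ![0,0,-1,0]]
def A2 : Matrix (Fin 4) (Fin 4) ℝ := ![![0,0,1,0], ![0,0,0,1], ![-1,0,0,0], ![0,-1,0,0]]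
def A3 : Matrix (Fin 4) (Fin 4) ℝ := ![![0,0,0,1], ![0,0,-1,0], ![0,1,0,0], ![-1,0,0,0]]

lemma fv2 : ((2:Fin 4):ℕ) = 2 := rfl
lemma fv3 : ((3:Fin 4):ℕ) = 3 := rfl

lemma A1t : A1ᵀ = -A1 := by
  ext i j; simp only [Matrix.transpose_apply, Matrix.neg_apply]; fin_cases i <;> fin_cases j <;> simp [A1, Matrix.vecHead, Matrix.vecTail]
lemma A2t : A2ᵀ = -A2 := by
  ext i j; simp only [Matrix.transpose_apply, Matrix.neg_apply]; fin_cases i <;> fin_cases j <;> simp [A2, Matrix.vecHead, Matrix.vecTail]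
lemma A3t : A3ᵀ = -A3 := by
  ext i j; simp only [Matrix.transpose_apply, Matrix.neg_apply]; fin_cases i <;> fin_cases j <;> simp [A3, Matrix.vecHead, Matrix.vecTail]

lemma A1s : hodgeStar A1 = -A1 := by
  ext i j
  rw [Matrix.neg_apply]
  fin_cases i <;> fin_cases j <;>
    simp [hodgeStar, A1, eps, gInv, Fin.sum_univ_four, fv2, fv3,
      Matrix.vecHead, Matrix.vecTail] <;> norm_num
lemma A2s : hodgeStar A2 = -A2 := by
  ext i j
  rw [Matrix.neg_apply]
  fin_cases i <;> fin_cases j <;>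
    simp [hodgeStar, A2, eps, gInv, Fin.sum_univ_four, fv2, fv3,
      Matrix.vecHead, Matrix.vecTail] <;> norm_num
lemma A3s : hodgeStar A3 = -A3 := by
  ext i j
  rw [Matrix.neg_apply]
  fin_cases i <;> fin_cases j <;>
    simp [hodgeStar, A3, eps, gInv, Fin.sum_univ_four, fv2, fv3,
      Matrix.vecHead, Matrix.vecTail] <;> norm_num

lemma oA1 (v w : Fin 4 → ℝ) : ωval A1 v w = G (J'map v) w := by
  simp [ωval, A1, G, J'map, Fin.sum_univ_four, Matrix.vecHead, Matrix.vecTail]; ring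
lemma oA2 (v w : Fin 4 → ℝ) : ωval A2 v w = -G (Kmap v) w := by
  simp [ωval, A2, G, Kmap, Fin.sum_univ_four, Matrix.vecHead, Matrix.vecTail]; ring
lemma oA3 (v w : Fin 4 → ℝ) : ωval A3 v w = -G (Lmap v) w := by
  simp [ωval, A3, G, Lmap, Fin.sum_univ_four, Matrix.vecHead, Matrix.vecTail]; ring

lemma skewJ (p q : Fin 4 → ℝ) : G p (J'map q) = -G (J'map p) q := by
  simp [G, J'map]; ring
lemma skewK (p q : Fin 4 → ℝ) : G p (Kmap q) = -G (Kmap p) q := by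
  simp [G, Kmap]; ring
lemma skewL (p q : Fin 4 → ℝ) : G p (Lmap q) = -G (Lmap p) q := by
  simp [G, Lmap]; ring

theorem stmt9 (P : Submodule ℝ (Fin 4 → ℝ)) (hP : Module.finrank ℝ P = 2) :
    (∀ M : Matrix (Fin 4) (Fin 4) ℝ, Mᵀ = -M → hodgeStar M = -M →
        ∀ v ∈ P, ∀ w ∈ P, ωval M v w = 0) ↔
      ((∀ v ∈ P, J'map v ∈ P) ∧ (∀ v ∈ P, ∀ w ∈ P, G v (J'map w) = 0)) := by
  have hfr4 : Module.finrank ℝ (Fin 4 → ℝ) = 4 := by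
    simp [Module.finrank_pi]
  constructor
  · intro h
    have h1 : ∀ v ∈ P, ∀ w ∈ P, G (J'map v) w = 0 := by
      intro v hv w hw
      have := h A1 A1t A1s v hv w hw
      rwa [oA1] at this
    have h2 : ∀ v ∈ P, ∀ w ∈ P, G (Kmap v) w = 0 := by
      intro v hv w hw
      have := h A2 A2t A2s v hv w hw
      rw [oA2] at this; linarith
    have h3 : ∀ v ∈ P, ∀ w ∈ P, G (Lmap v) w = 0 := by
      intro v hv w hw
      have := h A3 A3t A3s v hv w hw
      rw [oA3] at this; linarith
    set Q := Bf.orthogonal P with hQdef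
    have hQrank : Module.finrank ℝ Q = 2 := by
      rw [hQdef, LinearMap.BilinForm.finrank_orthogonal hnd, hP, hfr4]
    have memQ : ∀ x, (∀ u ∈ P, G u x = 0) → x ∈ Q := by
      intro x hx
      rw [hQdef, LinearMap.BilinForm.mem_orthogonal_iff]
      intro u hu
      exact hx u hu
    have hJle : P.map Jlin.toLinearMap ≤ Q := by
      rintro x ⟨v, hv, rfl⟩
      exact memQ _ (fun u hu => by
        show G u (J'map v) = 0
        rw [skewJ, h1 u hu v hv, neg_zero])
    have hKle : P.map Klin.toLinearMap ≤ Q := by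
      rintro x ⟨v, hv, rfl⟩
      exact memQ _ (fun u hu => by
        show G u (Kmap v) = 0
        rw [skewK, h2 u hu v hv, neg_zero])
    have hLle : P.map Llin.toLinearMap ≤ Q := by
      rintro x ⟨v, hv, rfl⟩
      exact memQ _ (fun u hu => by
        show G u (Lmap v) = 0
        rw [skewL, h3 u hu v hv, neg_zero])
    have hJeq : P.map Jlin.toLinearMap = Q :=
      Submodule.eq_of_le_of_finrank_eq hJle
        (by rw [LinearEquiv.finrank_map_eq, hP, hQrank])
    have hKeq : P.map Klin.toLinearMap = Q :=
      Submodule.eq_of_le_of_finrank_eq hKle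
        (by rw [LinearEquiv.finrank_map_eq, hP, hQrank])
    have hLeq : P.map Llin.toLinearMap = Q :=
      Submodule.eq_of_le_of_finrank_eq hLle
        (by rw [LinearEquiv.finrank_map_eq, hP, hQrank])
    -- K maps P into P
    have hKP : ∀ v ∈ P, Kmap v ∈ P := by
      intro v hv
      have : Llin.toLinearMap v ∈ P.map Jlin.toLinearMap := by
        rw [hJeq, ← hLeq]
        exact ⟨v, hv, rfl⟩
      obtain ⟨u, hu, huv⟩ := this
      have c0 := congrFun huv 0
      have c1 := congrFun huv 1
      have c2 := congrFun huv 2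
      have c3 := congrFun huv 3
      simp [Jlin, Llin, J'map, Lmap, Matrix.vecHead, Matrix.vecTail] at c0 c1 c2 c3
      have : Kmap v = -u := by
        funext i; fin_cases i <;>
          simp [Kmap, Matrix.vecHead, Matrix.vecTail] <;> linarith
      rw [this]
      exact P.neg_mem hu
    have hLP : ∀ v ∈ P, Lmap v ∈ P := by
      intro v hv
      have : Klin.toLinearMap v ∈ P.map Jlin.toLinearMap := by
        rw [hJeq, ← hKeq]
        exact ⟨v, hv, rfl⟩
      obtain ⟨u, hu, huv⟩ := this
      have c0 := congrFun huv 0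
      have c1 := congrFun huv 1
      have c2 := congrFun huv 2
      have c3 := congrFun huv 3
      simp [Jlin, Klin, J'map, Kmap, Matrix.vecHead, Matrix.vecTail] at c0 c1 c2 c3
      have : Lmap v = u := by
        funext i; fin_cases i <;>
          simp [Lmap, Matrix.vecHead, Matrix.vecTail] <;> linarith
      rw [this]
      exact hu
    constructor
    · intro v hv
      have : J'map v = Kmap (Lmap v) := by
        funext i; fin_cases i <;>
          simp [J'map, Kmap, Lmap, Matrix.vecHead, Matrix.vecTail]
      rw [this]
      exact hKP _ (hLP v hv)
    · intro v hv w hw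
      rw [skewJ, h1 v hv w hw, neg_zero]
  · rintro ⟨hJ, hG⟩
    -- first: the three basic anti-self-dual forms vanish on P
    have key : ∀ v ∈ P, ∀ w ∈ P,
        (v 0 * w 1 - v 1 * w 0 + v 2 * w 3 - v 3 * w 2 = 0) ∧
        (v 0 * w 2 - v 2 * w 0 + v 1 * w 3 - v 3 * w 1 = 0) ∧
        (v 0 * w 3 - v 3 * w 0 - v 1 * w 2 + v 2 * w 1 = 0) := by
      intro v hv w hw
      rcases eq_or_ne v 0 with rfl | hvne
      · refine ⟨?_, ?_, ?_⟩ <;> simp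
      · -- G v v = 0
        have hGvv : v 0 ^ 2 + v 1 ^ 2 - v 2 ^ 2 - v 3 ^ 2 = 0 := by
          have := hG v hv (J'map v) (hJ v hv)
          simp [G, J'map, Matrix.vecHead, Matrix.vecTail] at this
          nlinarith [this]
        -- w = a • v + b • J'map v
        set x : P := ⟨v, hv⟩ with hxdef
        set y : P := ⟨J'map v, hJ v hv⟩ with hydef
        have hli : LinearIndependent ℝ ![x, y] := by
          rw [LinearIndependent.pair_iff]
          intro s t hst
          have hst' : s • v + t • J'map v = 0 := by
            have := congrArg (Subtype.val) hst
            simpa [hxdef, hydef] using this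
          have c0 := congrFun hst' 0
          have c1 := congrFun hst' 1
          have c2 := congrFun hst' 2
          have c3 := congrFun hst' 3
          simp [J'map, Matrix.vecHead, Matrix.vecTail] at c0 c1 c2 c3
          have k0 : (s^2 + t^2) * v 0 = 0 := by linear_combination s * c0 + t * c1
          have k1 : (s^2 + t^2) * v 1 = 0 := by linear_combination (-t) * c0 + s * c1
          have k2 : (s^2 + t^2) * v 2 = 0 := by linear_combination s * c2 + (-t) * c3
          have k3 : (s^2 + t^2) * v 3 = 0 := by linear_combination t * c2 + s * c3
          rcases eq_or_ne (s^2 + t^2) 0 with hz | hz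
          · constructor <;> nlinarith [sq_nonneg s, sq_nonneg t]
          · exfalso
            apply hvne
            funext i
            fin_cases i
            · exact (mul_eq_zero.mp k0).resolve_left hz
            · exact (mul_eq_zero.mp k1).resolve_left hz
            · exact (mul_eq_zero.mp k2).resolve_left hz
            · exact (mul_eq_zero.mp k3).resolve_left hz
        have hspan := hli.span_eq_top_of_card_eq_finrank (by simpa using hP.symm)
        have hmem : (⟨w, hw⟩ : P) ∈ Submodule.span ℝ (Set.range ![x, y]) := by
          rw [hspan]; trivial
        have hrange : Set.range ![x, y] = {x, y} := by
          ext z; simp [Matrix.range_cons, Matrix.range_empty, or_comm]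
        rw [hrange, Submodule.mem_span_pair] at hmem
        obtain ⟨a, b, hab⟩ := hmem
        have hab' : a • v + b • J'map v = w := by
          have := congrArg (Subtype.val) hab
          simpa [hxdef, hydef] using this
        have e0 := congrFun hab' 0
        have e1 := congrFun hab' 1
        have e2 := congrFun hab' 2
        have e3 := congrFun hab' 3
        simp [J'map, Matrix.vecHead, Matrix.vecTail] at e0 e1 e2 e3
        refine ⟨?_, ?_, ?_⟩
        · linear_combination (-(v 0)) * e1 + (v 1) * e0 - (v 2) * e3 + (v 3) * e2 + b * hGvv
        · linear_combination (-(v 0)) * e2 + (v 2) * e0 - (v 1) * e3 + (v 3) * e1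
        · linear_combination (-(v 0)) * e3 + (v 3) * e0 + (v 1) * e2 - (v 2) * e1
    intro M hT hS v hv w hw
    obtain ⟨hB1, hB2, hB3⟩ := key v hv w hw
    have t : ∀ i j : Fin 4, M j i = -M i j := by
      intro i j
      have := congrFun (congrFun hT i) j
      simpa [Matrix.transpose_apply] using this
    have d0 : M 0 0 = 0 := by have := t 0 0; linarith
    have d1 : M 1 1 = 0 := by have := t 1 1; linarith
    have d2 : M 2 2 = 0 := by have := t 2 2; linarith
    have d3 : M 3 3 = 0 := by have := t 3 3; linarith
    have s01 : M 2 3 = M 0 1 := by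
      have := congrFun (congrFun hS 0) 1
      simp [hodgeStar, eps, gInv, Fin.sum_univ_four, fv2, fv3,
        Matrix.vecHead, Matrix.vecTail] at this
      have h32 := t 2 3
      nlinarith [this, h32]
    have s02 : M 1 3 = M 0 2 := by
      have := congrFun (congrFun hS 0) 2
      simp [hodgeStar, eps, gInv, Fin.sum_univ_four, fv2, fv3,
        Matrix.vecHead, Matrix.vecTail] at this
      have h31 := t 1 3
      nlinarith [this, h31]
    have s03 : M 1 2 = -M 0 3 := by
      have := congrFun (congrFun hS 0) 3
      simp [hodgeStar, eps, gInv, Fin.sum_univ_four, fv2, fv3,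
        Matrix.vecHead, Matrix.vecTail] at this
      have h21 := t 1 2
      nlinarith [this, h21]
    have m10 := t 0 1
    have m20 := t 0 2
    have m30 := t 0 3
    have m21 := t 1 2
    have m31 := t 1 3
    have m32 := t 2 3
    simp only [ωval, Fin.sum_univ_four]
    rw [d0, d1, d2, d3, m10, m20, m30, m21, m31, m32, s01, s02, s03]
    linear_combination (M 0 1) * hB1 + (M 0 2) * hB2 + (M 0 3) * hB3
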